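/- Let 𝔤 be a Lie subalgebra of the matrix Lie algebra gl_N(ℂ) (N×N complex matrices with the commutator bracket) which is semisimple as an abstract complex Lie algebra. If X ∈ 𝔤 is such that the adjoint endomorphism ad X : 𝔤 → 𝔤, Y ↦ [X,Y], is nilpotent, then X is a nilpotent matrix. -/

import Mathlib

set_option maxHeartbeats 1000000

attribute [local instance 100] LieRing.ofAssociativeRing

open LinearMap Module Set

/-- If `(ad f)^m y = 0` then `y` preserves every maximal generalized eigenspace of `f`. -/
lemma aux_mapsTo {V : Type*} [AddCommGroup V] [Module ℂ V] {f y : Module.End ℂ V} {m : ℕ}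
    (h : ((LieAlgebra.ad ℂ (Module.End ℂ V)) f ^ m) y = 0) (μ : ℂ) :
    Set.MapsTo y (f.maxGenEigenspace μ) (f.maxGenEigenspace μ) := by
  intro v hv
  rw [SetLike.mem_coe, Module.End.mem_maxGenEigenspace] at hv ⊢
  obtain ⟨n, hn⟩ := hv
  set a : Module.End ℂ V := f - μ • 1 with ha
  have hada : LieAlgebra.ad ℂ (Module.End ℂ V) a = LieAlgebra.ad ℂ (Module.End ℂ V) f := by
    ext z
    rw [LieAlgebra.ad_apply, LieAlgebra.ad_apply, ha, sub_lie, smul_lie]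
    simp [Ring.lie_def]
  have hta : LieAlgebra.ad ℂ (Module.End ℂ V) a
      = mulLeft ℂ a - mulRight ℂ a := by
    rw [LieAlgebra.ad_eq_lmul_left_sub_lmul_right]; rfl
  have hcomm : Commute (mulRight ℂ a) (LieAlgebra.ad ℂ (Module.End ℂ V) a) := by
    rw [hta]
    exact (LinearMap.commute_mulLeft_right (R := ℂ) a a).symm.sub_right (Commute.refl _)
  have hl : mulLeft ℂ a = mulRight ℂ a + LieAlgebra.ad ℂ (Module.End ℂ V) a := by
    rw [hta]; abel
  refine ⟨m + n, ?_⟩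
  have hL : (mulLeft ℂ a) ^ (m + n) = ∑ i ∈ Finset.range (m + n + 1),
      mulRight ℂ a ^ i * (LieAlgebra.ad ℂ (Module.End ℂ V) a) ^ (m + n - i)
        * ((m + n).choose i : Module.End ℂ (Module.End ℂ V)) := by
    rw [hl, hcomm.add_pow]
  have key : (a ^ (m + n)) (y v) = (((mulLeft ℂ a) ^ (m + n)) y) v := by
    rw [LinearMap.pow_mulLeft]; rfl
  rw [key, hL, LinearMap.sum_apply, LinearMap.sum_apply]
  apply Finset.sum_eq_zero
  intro i hi
  have hterm : ((mulRight ℂ a ^ i * (LieAlgebra.ad ℂ (Module.End ℂ V) a) ^ (m + n - i)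
      * ((m + n).choose i : Module.End ℂ (Module.End ℂ V))) y)
      = ((m + n).choose i) • ((((LieAlgebra.ad ℂ (Module.End ℂ V) a) ^ (m + n - i)) y)
          * a ^ i) := by
    rw [Module.End.mul_apply, Module.End.mul_apply, Module.End.natCast_apply, map_nsmul,
      map_nsmul, LinearMap.pow_mulRight, LinearMap.mulRight_apply]
  rw [hterm, LinearMap.smul_apply, Module.End.mul_apply]
  rcases le_or_gt i n with hin | hin
  · -- ad-power kills y
    have h1 : ((LieAlgebra.ad ℂ (Module.End ℂ V) a) ^ (m + n - i)) y = 0 := by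
      have hmn : m + n - i = (n - i) + m := by omega
      rw [hada, hmn, pow_add, Module.End.mul_apply, h, map_zero]
    rw [h1]
    simp
  · -- a-power kills v
    have h2 : (a ^ i) v = 0 := by
      have hndef : i = (i - n) + n := by omega
      rw [hndef, pow_add, Module.End.mul_apply, hn, map_zero]
    rw [h2, map_zero, smul_zero]

/-- A semisimple Lie algebra is perfect. -/
lemma aux_perfect (R L : Type*) [CommRing R] [LieRing L] [LieAlgebra R L]
    [LieAlgebra.IsSemisimple R L] :
    ⁅(⊤ : LieIdeal R L), (⊤ : LieIdeal R L)⁆ = ⊤ := by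
  rw [eq_top_iff]
  conv_lhs => rw [← LieAlgebra.IsSemisimple.sSup_atoms_eq_top (R := R) (L := L)]
  apply sSup_le
  intro I hI
  have h1 : ⁅I, I⁆ = I :=
    lie_eq_self_of_isAtom_of_nonabelian I hI
      (LieAlgebra.IsSemisimple.non_abelian_of_isAtom I hI)
  calc I = ⁅I, I⁆ := h1.symm
    _ ≤ ⁅(⊤ : LieIdeal R L), (⊤ : LieIdeal R L)⁆ := LieSubmodule.mono_lie le_top le_top

/-- Let `𝔤` be a Lie subalgebra of `gl_N(ℂ)` (the `N×N` complex
matrices with the commutator bracket) which is semisimple as an abstract complex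
Lie algebra.  If `X ∈ 𝔤` is such that `ad X : 𝔤 → 𝔤` is nilpotent, then `X` is a
nilpotent matrix. -/
theorem stmt11 {N : ℕ}
    (g : LieSubalgebra ℂ (Matrix (Fin N) (Fin N) ℂ))
    [FiniteDimensional ℂ g] [LieAlgebra.IsSemisimple ℂ g]
    (X : g) (hX : IsNilpotent (LieAlgebra.ad ℂ g X)) :
    IsNilpotent (X : Matrix (Fin N) (Fin N) ℂ) := by
  classical
  set A := Matrix (Fin N) (Fin N) ℂ with hA
  obtain ⟨m, hm⟩ := hX
  set e : A ≃ₐ[ℂ] Module.End ℂ (Fin N → ℂ) := Matrix.toLinAlgEquiv' with he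
  set f : Module.End ℂ (Fin N → ℂ) := e (X : A) with hf
  have ebr : ∀ a b : A, e ⁅a, b⁆ = ⁅e a, e b⁆ := by
    intro a b; simp [Ring.lie_def, map_sub, map_mul]
  -- step 1: every y ∈ g is killed by (ad (X : A))^m inside matrices
  have step1 : ∀ y : g, ((LieAlgebra.ad ℂ A (X : A)) ^ m) (y : A) = 0 := by
    intro y
    have aux : ∀ k : ℕ, ((LieAlgebra.ad ℂ A (X : A)) ^ k) (y : A)
        = (((LieAlgebra.ad ℂ g X) ^ k) y : g) := by
      intro k
      induction k with
      | zero => rfl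
      | succ k ih =>
        rw [pow_succ', pow_succ', Module.End.mul_apply, Module.End.mul_apply, ih]
        rfl
    rw [aux m, hm]
    rfl
  -- step 2: transport to linear endomorphisms
  have step2 : ∀ y : g, ((LieAlgebra.ad ℂ (Module.End ℂ (Fin N → ℂ)) f) ^ m) (e (y : A)) = 0 := by
    intro y
    have aux : ∀ k : ℕ, ((LieAlgebra.ad ℂ (Module.End ℂ (Fin N → ℂ)) f) ^ k) (e (y : A))
        = e (((LieAlgebra.ad ℂ A (X : A)) ^ k) (y : A)) := by
      intro k
      induction k with
      | zero => rfl
      | succ k ih =>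
        rw [pow_succ', pow_succ', Module.End.mul_apply, Module.End.mul_apply, ih,
          LieAlgebra.ad_apply, LieAlgebra.ad_apply, ebr]
    rw [aux m, step1 y, map_zero]
  have hW : ∀ (μ : ℂ) (y : g),
      Set.MapsTo (e (y : A)) (f.maxGenEigenspace μ) (f.maxGenEigenspace μ) :=
    fun μ y => aux_mapsTo (step2 y) μ
  -- For each nonzero μ the generalized eigenspace is trivial
  have key : ∀ μ : ℂ, μ ≠ 0 → f.maxGenEigenspace μ = ⊥ := by
    intro μ hμ
    set W := f.maxGenEigenspace μ with hWdef
    set T : g → Module.End ℂ W := fun y => (e (y : A)).restrict (fun x hx => hW μ y hx) with hT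
    have hTbr : ∀ z w : g, T ⁅z, w⁆ = ⁅T z, T w⁆ := by
      intro z w
      refine LinearMap.ext fun v => ?_
      have : ((⁅z, w⁆ : g) : A) = (z : A) * (w : A) - (w : A) * (z : A) := by
        rw [LieSubalgebra.coe_bracket, Ring.lie_def]
      refine Subtype.ext ?_
      simp only [T, LinearMap.restrict_apply, this, map_sub, map_mul, Ring.lie_def, LieRing.of_associative_ring_bracket,
        LinearMap.sub_apply, Module.End.mul_apply, Submodule.coe_sub]
      rfl
    have htrbr : ∀ z w : g, trace ℂ W (T ⁅z, w⁆) = 0 := by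
      intro z w
      rw [hTbr]
      exact LinearMap.trace_lie _ _
    -- trace of T X vanishes since g is perfect
    have htr0 : trace ℂ W (T X) = 0 := by
      have hXmem : X ∈ Submodule.span ℂ
          {m : g | ∃ x ∈ (⊤ : LieIdeal ℂ g), ∃ n ∈ (⊤ : LieIdeal ℂ g), ⁅x, n⁆ = m} := by
        rw [← LieSubmodule.lieIdeal_oper_eq_linear_span', aux_perfect ℂ g,
          LieSubmodule.top_toSubmodule]
        exact Submodule.mem_top
      have hzero : T 0 = 0 := by
        refine LinearMap.ext fun v => Subtype.ext ?_
        simp [T, LinearMap.restrict_apply]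
      have hadd : ∀ z w : g, T (z + w) = T z + T w := by
        intro z w
        refine LinearMap.ext fun v => Subtype.ext ?_
        simp [T, LinearMap.restrict_apply]
      have hsmul : ∀ (c : ℂ) (z : g), T (c • z) = c • T z := by
        intro c z
        refine LinearMap.ext fun v => Subtype.ext ?_
        have hs : ((c • z : g) : A) = c • (z : A) := rfl
        simp [T, LinearMap.restrict_apply, hs]
      refine Submodule.span_induction
        (p := fun z _ => trace ℂ W (T z) = 0) ?_ ?_ ?_ ?_ hXmem
      · rintro z ⟨a, -, b, -, rfl⟩
        exact htrbr a b
      · show trace ℂ W (T 0) = 0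
        rw [hzero, map_zero]
      · intro z w _ _ hz hw
        show trace ℂ W (T (z + w)) = 0
        rw [hadd, map_add, hz, hw, add_zero]
      · intro c z _ hz
        show trace ℂ W (T (c • z)) = 0
        rw [hsmul, map_smul, hz, smul_zero]
    -- on the other hand trace of T X equals μ * dim W
    have hsplit : T X = (f - algebraMap ℂ (Module.End ℂ (Fin N → ℂ)) μ).restrict
        (Module.End.mapsTo_maxGenEigenspace_of_comm
          (Algebra.mul_sub_algebraMap_commutes f μ) μ) + μ • (1 : Module.End ℂ W) := by
      refine LinearMap.ext fun v => Subtype.ext ?_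
      simp only [T, LinearMap.restrict_apply, LinearMap.add_apply, Submodule.coe_add,
        LinearMap.sub_apply, SetLike.val_smul, LinearMap.smul_apply, Module.End.one_apply]
      have : e (X : A) = f := rfl
      rw [this]
      simp [Algebra.algebraMap_eq_smul_one]
    have hniltr : trace ℂ W ((f - algebraMap ℂ (Module.End ℂ (Fin N → ℂ)) μ).restrict
        (Module.End.mapsTo_maxGenEigenspace_of_comm
          (Algebra.mul_sub_algebraMap_commutes f μ) μ)) = 0 := by
      have hnil := Module.End.isNilpotent_restrict_maxGenEigenspace_sub_algebraMap f μ
      exact (LinearMap.isNilpotent_trace_of_isNilpotent hnil).eq_zero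
    have htr : trace ℂ W (T X) = μ * (finrank ℂ W : ℂ) := by
      rw [hsplit, map_add, hniltr, zero_add, map_smul, trace_one]
      simp [smul_eq_mul]
    rw [htr0] at htr
    have hfr : (finrank ℂ W : ℂ) = 0 := by
      rcases mul_eq_zero.mp htr.symm with h | h
      · exact absurd h hμ
      · exact h
    have : finrank ℂ W = 0 := by exact_mod_cast hfr
    exact Submodule.finrank_eq_zero.mp this
  -- hence the zero generalized eigenspace is everything
  have htop : f.maxGenEigenspace 0 = ⊤ := by
    rw [eq_top_iff, ← Module.End.iSup_maxGenEigenspace_eq_top f]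
    apply iSup_le
    intro μ
    by_cases hμ : μ = 0
    · rw [hμ]
    · rw [key μ hμ]; exact bot_le
  have hnilf : IsNilpotent f := by
    refine ((LinearMap.charpoly_nilpotent_tfae f).out 0 2).mpr ?_
    intro v
    have hv : v ∈ f.maxGenEigenspace 0 := htop ▸ Submodule.mem_top
    rw [Module.End.mem_maxGenEigenspace] at hv
    obtain ⟨k, hk⟩ := hv
    exact ⟨k, by simpa using hk⟩
  obtain ⟨k, hk⟩ := hnilf
  refine ⟨k, ?_⟩
  have : e ((X : A) ^ k) = 0 := by rw [map_pow, ← hf, hk]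
  simpa using congrArg e.symm this
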